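/- Let ρ: [0,∞) → [0,∞) be concave, nondecreasing, with ρ(0) = 0 and ρ positive on (0,∞), extended coordinate-wise to vectors: ρ(u) = ∑_i ρ(|u_i|). Fix ξ > 0, m, and A ⊆ [m]. If u ∈ ℝ^m with all coordinates nonzero satisfies ρ(u_{Aᶜ}) ≤ ξ ρ(u_A), and M is an index set of the |A| largest coordinates of u in absolute value, then ‖u_{Mᶜ}‖₁ ≤ ξ‖u_M‖₁. -/

import Mathlib

open Finset

/-- If `u` (with all coordinates nonzero) lies in the generalized restricted cone
`ρ(u_{Aᶜ}) ≤ ξ ρ(u_A)` for a concave nondecreasing `ρ` with `ρ 0 = 0` positive on `(0,∞)`,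
and `M` is an index set of the `|A|` largest coordinates of `u` in absolute value, then
`‖u_{Mᶜ}‖₁ ≤ ξ ‖u_M‖₁`. -/
theorem stmt11 (ρ : ℝ → ℝ)
    (hnonneg : ∀ x, 0 ≤ x → 0 ≤ ρ x)
    (hconc : ∀ x y t : ℝ, 0 ≤ x → 0 ≤ y → 0 ≤ t → t ≤ 1 →
      t * ρ x + (1 - t) * ρ y ≤ ρ (t * x + (1 - t) * y))
    (hmono : ∀ x y : ℝ, 0 ≤ x → x ≤ y → ρ x ≤ ρ y)
    (h0 : ρ 0 = 0)
    (hpos : ∀ x : ℝ, 0 < x → 0 < ρ x)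
    (m : ℕ) (ξ : ℝ) (hξ : 0 < ξ)
    (A M : Finset (Fin m)) (u : Fin m → ℝ)
    (hu : ∀ i, u i ≠ 0)
    (hcone : ∑ i ∈ Aᶜ, ρ |u i| ≤ ξ * ∑ i ∈ A, ρ |u i|)
    (hMcard : M.card = A.card)
    (hM : ∀ i ∈ M, ∀ j ∉ M, |u j| ≤ |u i|) :
    ∑ i ∈ Mᶜ, |u i| ≤ ξ * ∑ i ∈ M, |u i| := by
  classical
  have hupos : ∀ i, 0 < |u i| := fun i => abs_pos.mpr (hu i)
  have hρpos : ∀ i, 0 < ρ |u i| := fun i => hpos _ (hupos i)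
  -- key: ρ(x)/x nonincreasing, i.e. x ≤ y → x * ρ y ≤ y * ρ x
  have key : ∀ x y : ℝ, 0 < x → x ≤ y → x * ρ y ≤ y * ρ x := by
    intro x y hx hxy
    have hy : 0 < y := lt_of_lt_of_le hx hxy
    have ht0 : 0 ≤ x / y := by positivity
    have ht1 : x / y ≤ 1 := by rw [div_le_one hy]; exact hxy
    have h := hconc y 0 (x / y) hy.le le_rfl ht0 ht1
    simp only [h0, mul_zero, add_zero] at h
    rw [div_mul_cancel₀ x hy.ne'] at h
    have := mul_le_mul_of_nonneg_left h hy.le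
    calc x * ρ y = y * (x / y * ρ y) := by field_simp
      _ ≤ y * ρ x := this
  by_cases hMemp : M = ∅
  · -- then A = ∅ and hcone forces every ρ|u i| to vanish, contradiction unless m = 0
    have hA : A = ∅ := Finset.card_eq_zero.mp (hMcard ▸ hMemp ▸ Finset.card_empty)
    rw [hA] at hcone
    simp only [Finset.sum_empty, mul_zero, Finset.compl_empty] at hcone
    have hzero : ∀ i ∈ (Finset.univ : Finset (Fin m)), ρ |u i| = 0 :=
      (Finset.sum_eq_zero_iff_of_nonneg (fun i _ => (hρpos i).le)).mp
        (le_antisymm hcone (Finset.sum_nonneg (fun i _ => (hρpos i).le)))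
    have : IsEmpty (Fin m) := by
      by_contra h
      rw [not_isEmpty_iff] at h
      obtain ⟨i⟩ := h
      exact (hρpos i).ne' (hzero i (Finset.mem_univ i))
    haveI := this
    simp [hMemp]
  · have hMne : M.Nonempty := Finset.nonempty_iff_ne_empty.mpr hMemp
    -- rearrangement: sum of ρ over A \ M is at most over M \ A
    have hcards : (A \ M).card = (M \ A).card := Finset.card_sdiff_comm hMcard.symm
    have hswap : ∑ j ∈ A \ M, ρ |u j| ≤ ∑ i ∈ M \ A, ρ |u i| := by
      by_cases hAM : (A \ M).Nonempty
      · have hMA : (M \ A).Nonempty := by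
          rw [← Finset.card_pos, ← hcards, Finset.card_pos]; exact hAM
        obtain ⟨i₁, hi₁, hi₁min⟩ := Finset.exists_min_image (M \ A) (fun i => ρ |u i|) hMA
        have hi₁M : i₁ ∈ M := (Finset.mem_sdiff.mp hi₁).1
        calc ∑ j ∈ A \ M, ρ |u j| ≤ ∑ _j ∈ A \ M, ρ |u i₁| := by
              refine Finset.sum_le_sum (fun j hj => ?_)
              exact hmono _ _ (abs_nonneg _) (hM i₁ hi₁M j (Finset.mem_sdiff.mp hj).2)
          _ = (A \ M).card • ρ |u i₁| := by rw [Finset.sum_const]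
          _ = (M \ A).card • ρ |u i₁| := by rw [hcards]
          _ ≤ ∑ i ∈ M \ A, ρ |u i| := Finset.card_nsmul_le_sum _ _ _ (fun i hi => hi₁min i hi)
      · rw [Finset.not_nonempty_iff_eq_empty] at hAM
        rw [hAM, Finset.sum_empty]
        exact Finset.sum_nonneg (fun i _ => (hρpos i).le)
    -- cone condition transfers from A to M
    have h1 : ∑ i ∈ Mᶜ, ρ |u i| ≤ ∑ i ∈ Aᶜ, ρ |u i| := by
      have e1 : Mᶜ \ Aᶜ = A \ M := by ext x; simp [and_comm]
      have e2 : Aᶜ \ Mᶜ = M \ A := by ext x; simp [and_comm]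
      rw [← Finset.sum_inter_add_sum_sdiff Mᶜ Aᶜ (fun i => ρ |u i|),
        ← Finset.sum_inter_add_sum_sdiff Aᶜ Mᶜ (fun i => ρ |u i|), e1, e2,
        Finset.inter_comm Mᶜ Aᶜ]
      exact add_le_add_right hswap _
    have h2 : ∑ i ∈ A, ρ |u i| ≤ ∑ i ∈ M, ρ |u i| := by
      rw [← Finset.sum_inter_add_sum_sdiff A M (fun i => ρ |u i|),
        ← Finset.sum_inter_add_sum_sdiff M A (fun i => ρ |u i|), Finset.inter_comm A M]
      exact add_le_add_right hswap _
    have hMcone : ∑ i ∈ Mᶜ, ρ |u i| ≤ ξ * ∑ i ∈ M, ρ |u i| :=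
      h1.trans (hcone.trans (mul_le_mul_of_nonneg_left h2 hξ.le))
    -- pivot at smallest coordinate of M
    obtain ⟨i₀, hi₀, hi₀min⟩ := Finset.exists_min_image M (fun i => |u i|) hMne
    set q : ℝ := |u i₀| with hq
    set p : ℝ := ρ |u i₀| with hp
    have hqpos : 0 < q := hupos i₀
    have hppos : 0 < p := hρpos i₀
    have hout : ∀ j ∈ Mᶜ, p * |u j| ≤ q * ρ |u j| := by
      intro j hj
      have hjM : j ∉ M := Finset.mem_compl.mp hj
      have := key |u j| q (hupos j) (hM i₀ hi₀ j hjM)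
      linarith [this]
    have hin : ∀ i ∈ M, q * ρ |u i| ≤ p * |u i| := by
      intro i hi
      have := key q |u i| hqpos (hi₀min i hi)
      linarith [this]
    have main : p * ∑ i ∈ Mᶜ, |u i| ≤ p * (ξ * ∑ i ∈ M, |u i|) := by
      calc p * ∑ i ∈ Mᶜ, |u i| = ∑ i ∈ Mᶜ, p * |u i| := by rw [Finset.mul_sum]
        _ ≤ ∑ i ∈ Mᶜ, q * ρ |u i| := Finset.sum_le_sum hout
        _ = q * ∑ i ∈ Mᶜ, ρ |u i| := by rw [Finset.mul_sum]
        _ ≤ q * (ξ * ∑ i ∈ M, ρ |u i|) := mul_le_mul_of_nonneg_left hMcone hqpos.le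
        _ = ξ * ∑ i ∈ M, q * ρ |u i| := by simp only [Finset.mul_sum]; exact Finset.sum_congr rfl (fun i _ => by ring)
        _ ≤ ξ * ∑ i ∈ M, p * |u i| := mul_le_mul_of_nonneg_left (Finset.sum_le_sum hin) hξ.le
        _ = p * (ξ * ∑ i ∈ M, |u i|) := by simp only [Finset.mul_sum]; exact Finset.sum_congr rfl (fun i _ => by ring)
    exact le_of_mul_le_mul_left main hppos
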